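/- The series ∑_{k=0}^∞ p_k converges in the strong operator topology to the orthogonal projection onto the closed linear span of {e_n : n ∈ ℤ, n ≠ −1}; equivalently, for every f ∈ ℓ²(ℤ), the partial sums ∑_{k=0}^{N} p_k f converge in norm, as N → ∞, to f − f(−1)·e_{−1}. -/

import Mathlib

noncomputable section

open Filter
open scoped ENNReal

/-- `ℓ²(ℤ)` with complex coefficients. -/
abbrev H : Type := lp (fun _ : ℤ => ℂ) 2

/-- The standard orthonormal basis vectors `e n` of `ℓ²(ℤ)`. -/
def e (n : ℤ) : H := lp.single 2 n 1

local notation "⟪" x ", " y "⟫" => @inner ℂ _ _ x y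

lemma e_apply (n m : ℤ) : e n m = if m = n then 1 else 0 := by
  rw [e, lp.single_apply]
  by_cases h : m = n
  · subst h; simp
  · simp [h]

lemma coord_eq_inner (x : H) (n : ℤ) : ⟪e n, x⟫ = x n := by
  rw [e, lp.inner_single_left]
  simp [RCLike.inner_apply]

lemma H_ext {x y : H} (h : ∀ n, x n = y n) : x = y := lp.ext (funext h)

lemma norm_le_coord {x y : H} (h : ∀ m, ‖x m‖ ≤ ‖y m‖) : ‖x‖ ≤ ‖y‖ := by
  have hp : (0:ℝ) < (2 : ℝ≥0∞).toReal := by norm_num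
  rw [← Real.rpow_le_rpow_iff (norm_nonneg _) (norm_nonneg _) hp,
    lp.norm_rpow_eq_tsum hp, lp.norm_rpow_eq_tsum hp]
  exact Summable.tsum_le_tsum (fun m => Real.rpow_le_rpow (norm_nonneg _) (h m) hp.le)
    ((lp.memℓp x).summable hp) ((lp.memℓp y).summable hp)

/-- The series `∑ₖ p_k` converges in the strong operator topology to the orthogonal
projection onto the closed linear span of `{e_n : n ≠ −1}`: for every `f ∈ ℓ²(ℤ)` the
partial sums `∑_{k=0}^{N} p_k f` converge in norm to `f − f(−1)·e_{−1}`. -/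
theorem sum_pk_converges_strongly
    (U S₂ : H →L[ℂ] H)
    (hU : ∀ n : ℤ, U (e n) = e (n + 1))
    (hS₂ : ∀ (f : H) (n : ℤ), S₂ f n = if Even n then f (n / 2) else 0)
    (p : ℕ → H →L[ℂ] H)
    (hp : ∀ k : ℕ, p k = (U * S₂) ^ k * (S₂ * ContinuousLinearMap.adjoint S₂) *
      (ContinuousLinearMap.adjoint (U * S₂)) ^ k) :
    ∀ f : H,
      Tendsto (fun N : ℕ => ∑ k ∈ Finset.range (N + 1), p k f) atTop
        (nhds (f - f (-1) • e (-1))) := by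
  -- `S₂` on basis vectors
  have hS₂e : ∀ n : ℤ, S₂ (e n) = e (2 * n) := by
    intro n
    refine H_ext fun m => ?_
    rw [hS₂]
    by_cases hm : Even m
    · rw [if_pos hm]
      obtain ⟨r, rfl⟩ := hm
      rw [← two_mul, Int.mul_ediv_cancel_left _ two_ne_zero, e_apply, e_apply]
      by_cases h : r = n
      · subst h; simp
      · rw [if_neg h, if_neg (by omega)]
    · rw [if_neg hm, e_apply, if_neg ?_]
      rintro rfl
      exact hm ⟨n, two_mul n⟩
  -- pointwise formula for `U`
  have hUadj : ∀ n : ℤ, ContinuousLinearMap.adjoint U (e n) = e (n - 1) := by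
    intro n
    refine H_ext fun m => ?_
    rw [← coord_eq_inner, ContinuousLinearMap.adjoint_inner_right, hU, e, e,
      lp.inner_single_right, e_apply]
    by_cases h : n = m + 1
    · rw [if_pos (by omega), lp.single_apply, Pi.single_apply, if_pos (by omega : n = m + 1)]
      simp
    · rw [if_neg (by omega), lp.single_apply, Pi.single_apply, if_neg (by omega : ¬ n = m + 1)]
      simp
  have hUf : ∀ (g : H) (m : ℤ), U g m = g (m - 1) := by
    intro g m
    rw [← coord_eq_inner, ← ContinuousLinearMap.adjoint_inner_left, hUadj, coord_eq_inner]
  -- pointwise formula for `adjoint S₂`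
  have hS₂adj : ∀ (g : H) (n : ℤ), ContinuousLinearMap.adjoint S₂ g n = g (2 * n) := by
    intro g n
    rw [← coord_eq_inner, ContinuousLinearMap.adjoint_inner_right, hS₂e, coord_eq_inner]
  -- pointwise formula for `S₁ = U * S₂`
  have hS1 : ∀ (g : H) (m : ℤ), (U * S₂) g m = if Even (m - 1) then g ((m - 1) / 2) else 0 := by
    intro g m
    rw [ContinuousLinearMap.mul_apply, hUf, hS₂]
  -- pointwise formula for `adjoint S₁`
  have hS1adj : ∀ (g : H) (n : ℤ),
      ContinuousLinearMap.adjoint (U * S₂) g n = g (2 * n + 1) := by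
    intro g n
    rw [← coord_eq_inner, ContinuousLinearMap.adjoint_inner_right,
      ContinuousLinearMap.mul_apply, hS₂e, hU, coord_eq_inner]
  -- powers of `adjoint S₁`
  have hS1adjpow : ∀ (k : ℕ) (g : H) (n : ℤ),
      ((ContinuousLinearMap.adjoint (U * S₂)) ^ k) g n = g (2 ^ k * (n + 1) - 1) := by
    intro k
    induction k with
    | zero =>
      intro g n
      rw [pow_zero, ContinuousLinearMap.one_apply]
      have h : (2:ℤ) ^ 0 * (n + 1) - 1 = n := by ring
      rw [h]
    | succ k ih =>
      intro g n
      rw [pow_succ, ContinuousLinearMap.mul_apply, ih, hS1adj]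
      have h : 2 * ((2:ℤ) ^ k * (n + 1) - 1) + 1 = 2 ^ (k + 1) * (n + 1) - 1 := by ring
      rw [h]
  -- powers of `S₁`
  have hS1pow : ∀ (k : ℕ) (g : H) (m : ℤ),
      ((U * S₂) ^ k) g m =
        if ((2:ℤ) ^ k) ∣ (m + 1) then g ((m + 1) / 2 ^ k - 1) else 0 := by
    intro k
    induction k with
    | zero =>
      intro g m
      rw [pow_zero, ContinuousLinearMap.one_apply, if_pos (by simp)]
      simp
    | succ k ih =>
      intro g m
      rw [pow_succ', ContinuousLinearMap.mul_apply, hS1]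
      by_cases hm : Even (m - 1)
      · rw [if_pos hm, ih]
        obtain ⟨r, hr⟩ := hm
        have hm2 : m = 2 * r + 1 := by omega
        have hdiv : (m - 1) / 2 = r := by
          have h : m - 1 = 2 * r := by omega
          rw [h, Int.mul_ediv_cancel_left _ two_ne_zero]
        have h1 : m + 1 = 2 * (r + 1) := by omega
        have h2 : (2:ℤ) ^ (k+1) = 2 * 2 ^ k := by ring
        have hcond : ((2:ℤ) ^ k ∣ r + 1) ↔ ((2:ℤ) ^ (k + 1) ∣ m + 1) := by
          rw [h1, h2, mul_dvd_mul_iff_left (two_ne_zero (α := ℤ))]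
        rw [hdiv]
        by_cases hc : (2:ℤ) ^ k ∣ r + 1
        · rw [if_pos hc, if_pos (hcond.mp hc)]
          have harg : (m + 1) / 2 ^ (k + 1) = (r + 1) / 2 ^ k := by
            rw [h1, h2, Int.mul_ediv_mul_of_pos _ _ (by norm_num : (0:ℤ) < 2)]
          rw [harg]
        · rw [if_neg hc, if_neg (fun hd => hc (hcond.mpr hd))]
      · rw [if_neg hm, if_neg ?_]
        intro hd
        obtain ⟨c, hc⟩ := dvd_trans (dvd_pow_self 2 (Nat.succ_ne_zero k)) hd
        exact hm ⟨c - 1, by omega⟩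
  -- pointwise formula for `p k`
  have hpk : ∀ (k : ℕ) (g : H) (m : ℤ),
      p k g m = if (((2:ℤ) ^ k) ∣ (m + 1) ∧ ¬ ((2:ℤ) ^ (k+1)) ∣ (m + 1)) then g m else 0 := by
    intro k g m
    rw [hp k, ContinuousLinearMap.mul_apply, ContinuousLinearMap.mul_apply, hS1pow]
    by_cases hdk : ((2:ℤ) ^ k) ∣ (m + 1)
    · rw [if_pos hdk]
      obtain ⟨c, hc⟩ := hdk
      have hdivc : (m + 1) / 2 ^ k = c := by
        rw [hc, Int.mul_ediv_cancel_left _ (pow_ne_zero k two_ne_zero)]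
      rw [hdivc, ContinuousLinearMap.mul_apply, hS₂]
      have h2 : (2:ℤ) ^ (k+1) = 2 ^ k * 2 := by ring
      have hcond : Even (c - 1) ↔ ¬ ((2:ℤ) ^ (k + 1) ∣ m + 1) := by
        rw [hc, h2, mul_dvd_mul_iff_left (pow_ne_zero k (two_ne_zero (α := ℤ)))]
        constructor
        · rintro ⟨r, hr⟩ ⟨s, hs⟩
          omega
        · intro h
          rcases Int.even_or_odd c with hce | hco
          · obtain ⟨r, hr⟩ := hce
            exact absurd ⟨r, by omega⟩ h
          · obtain ⟨r, hr⟩ := hco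
            exact ⟨r, by omega⟩
      by_cases hev : Even (c - 1)
      · rw [if_pos hev, if_pos ⟨⟨c, hc⟩, hcond.mp hev⟩]
        obtain ⟨r, hr⟩ := hev
        have hdr : (c - 1) / 2 = r := by rw [hr, ← two_mul, Int.mul_ediv_cancel_left _ two_ne_zero]
        rw [hdr, hS₂adj, hS1adjpow]
        have h6 : 2 * r + 1 = c := by omega
        have h7 : (2:ℤ) ^ k * (2 * r + 1) - 1 = m := by
          rw [h6]; linarith [hc]
        rw [h7]
      · rw [if_neg hev, if_neg (fun h => hev (hcond.mpr h.2))]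
    · rw [if_neg hdk, if_neg (fun h => hdk h.1)]
  -- coordinates of the partial sums
  have hsumc : ∀ (g : H) (N : ℕ) (m : ℤ),
      (∑ k ∈ Finset.range (N + 1), p k g) m
        = if ((2:ℤ) ^ (N+1)) ∣ (m + 1) then 0 else g m := by
    intro g N
    induction N with
    | zero =>
      intro m
      rw [Finset.sum_range_one, hpk]
      by_cases hd : ((2:ℤ) ^ 1) ∣ (m + 1)
      · rw [if_pos hd, if_neg (fun h => h.2 hd)]
      · rw [if_neg hd, if_pos ⟨by simp, by simpa using hd⟩]
    | succ N ih =>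
      intro m
      rw [Finset.sum_range_succ, lp.coeFn_add, Pi.add_apply, ih, hpk]
      by_cases hd2 : ((2:ℤ) ^ (N+2)) ∣ (m + 1)
      · have hd1 : ((2:ℤ) ^ (N+1)) ∣ (m + 1) :=
          dvd_trans (pow_dvd_pow 2 (by omega)) hd2
        rw [if_pos hd1, if_pos hd2, if_neg (fun h => h.2 hd2), add_zero]
      · rw [if_neg hd2]
        by_cases hd1 : ((2:ℤ) ^ (N+1)) ∣ (m + 1)
        · rw [if_pos hd1, if_pos ⟨hd1, hd2⟩, zero_add]
        · rw [if_neg hd1, if_neg (fun h => hd1 h.1), add_zero]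
  -- the main convergence argument
  intro f
  rw [Metric.tendsto_atTop]
  intro ε hε
  obtain ⟨s, hs⟩ := Metric.tendsto_atTop.mp
    (lp.hasSum_single (E := fun _ : ℤ => ℂ) ENNReal.ofNat_ne_top f) ε hε
  have hr : ‖f - ∑ i ∈ s, lp.single 2 i (f i)‖ < ε := by
    have := hs s le_rfl
    rwa [dist_eq_norm'] at this
  set r : H := f - ∑ i ∈ s, lp.single 2 i (f i) with hrdef
  have hrm : ∀ m : ℤ, m ∉ s → r m = f m := by
    intro m hm
    rw [hrdef, lp.coeFn_sub, Pi.sub_apply]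
    have : (∑ i ∈ s, lp.single 2 i (f i) : H) m = 0 := by
      rw [lp.coeFn_sum, Finset.sum_apply]
      refine Finset.sum_eq_zero fun i hi => ?_
      exact lp.single_apply_ne 2 i _ (by rintro rfl; exact hm hi)
    rw [this, sub_zero]
  refine ⟨∑ m ∈ s, (m + 1).natAbs, fun N hN => ?_⟩
  rw [dist_eq_norm]
  refine lt_of_le_of_lt (norm_le_coord fun m => ?_) hr
  rw [lp.coeFn_sub, Pi.sub_apply, lp.coeFn_sub, Pi.sub_apply, lp.coeFn_smul, Pi.smul_apply,
    hsumc, smul_eq_mul]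
  by_cases hm1 : m = -1
  · subst hm1
    rw [e_apply, if_pos rfl, if_pos (by simp), mul_one]
    simp
  · rw [e_apply, if_neg hm1, mul_zero, sub_zero]
    by_cases hd : ((2:ℤ) ^ (N+1)) ∣ (m + 1)
    · rw [if_pos hd, zero_sub, norm_neg]
      have hms : m ∉ s := by
        intro hm
        have hle : (m + 1).natAbs ≤ ∑ m ∈ s, (m + 1).natAbs :=
          Finset.single_le_sum (f := fun m => (m + 1).natAbs) (fun i _ => Nat.zero_le _) hm
        have hdn : (2:ℕ) ^ (N+1) ∣ (m + 1).natAbs := by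
          have h := Int.natAbs_dvd_natAbs.mpr hd
          rw [Int.natAbs_pow] at h
          exact h
        have hne : (m + 1).natAbs ≠ 0 := by
          simp only [ne_eq, Int.natAbs_eq_zero]
          omega
        have h1 : (2:ℕ) ^ (N+1) ≤ (m + 1).natAbs := Nat.le_of_dvd (Nat.pos_of_ne_zero hne) hdn
        have h2 : N < 2 ^ N := Nat.lt_two_pow_self
        have h3 : (2:ℕ) ^ N ≤ 2 ^ (N + 1) := Nat.pow_le_pow_right (by norm_num) (by omega)
        omega
      rw [hrm m hms]
    · rw [if_neg hd, sub_self, norm_zero]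
      exact norm_nonneg _

end
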